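/- Let R be a spherical Reuleaux triangle on S²: the intersection of three spherical disks of radius Δ ∈ (0, π/2) whose centers a, b, c are pairwise at spherical distance Δ. Then the circumradius of R equals arcsin((2√3/3) · sin(Δ/2)). -/

import Mathlib

open scoped RealInnerProductSpace

/-- Spherical distance between unit vectors of `E³`. -/
noncomputable def sdist (p q : EuclideanSpace ℝ (Fin 3)) : ℝ := Real.arccos ⟪p, q⟫

open Matrix in
/-- Gram matrix of four vectors in a 3-dimensional space is singular. -/
lemma gram4_det_eq_zero (v : Fin 4 → EuclideanSpace ℝ (Fin 3)) :
    (Matrix.of (fun i j : Fin 4 => ⟪v i, v j⟫)).det = 0 := by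
  set M : Matrix (Fin 4) (Fin 3) ℝ := Matrix.of (fun i l => v i l) with hM
  have hfac : Matrix.of (fun i j : Fin 4 => ⟪v i, v j⟫) = M * Mᵀ := by
    ext i j
    simp [hM, Matrix.mul_apply, PiLp.inner_apply, RCLike.inner_apply, mul_comm]
  by_contra hdet
  have hunit : IsUnit (M * Mᵀ) :=
    (Matrix.isUnit_iff_isUnit_det _).2 (isUnit_iff_ne_zero.2 (by rwa [hfac] at hdet))
  have h4 : (M * Mᵀ).rank = 4 := by
    simpa using Matrix.rank_of_isUnit _ hunit
  have h3 : (M * Mᵀ).rank ≤ 3 := by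
    refine le_trans (Matrix.rank_mul_le_left _ _) ?_
    simpa using Matrix.rank_le_card_width M
  omega

lemma key_ineq (k x y z : ℝ) (hk0 : 0 < k) (hk1 : k < 1)
    (hx : k ≤ x) (hy : k ≤ y) (hz : k ≤ z)
    (hE : (1 - k) * (1 + 2 * k) + k * (x + y + z) ^ 2
        - (1 + 2 * k) * (x ^ 2 + y ^ 2 + z ^ 2) = 0) :
    1 + 2 * k ≤ x + y + z := by
  have hP : 0 ≤ (x - k) * (y - k) + (y - k) * (z - k) + (x - k) * (z - k) := by
    have h1 := mul_nonneg (sub_nonneg.2 hx) (sub_nonneg.2 hy)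
    have h2 := mul_nonneg (sub_nonneg.2 hy) (sub_nonneg.2 hz)
    have h3 := mul_nonneg (sub_nonneg.2 hx) (sub_nonneg.2 hz)
    linarith
  have hkey : (x + y + z - (1 + 2 * k)) * ((1 + k) * (x + y + z) - (3 * k - 1) * (2 * k + 1))
      = 2 * (1 + 2 * k) * ((x - k) * (y - k) + (y - k) * (z - k) + (x - k) * (z - k)) := by
    linear_combination -hE
  have hfac : 0 < (1 + k) * (x + y + z) - (3 * k - 1) * (2 * k + 1) := by
    nlinarith [mul_nonneg (show (0:ℝ) ≤ 1 + k by linarith)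
      (show (0:ℝ) ≤ x + y + z - 3 * k by linarith),
      mul_pos (show (0:ℝ) < 1 - k by linarith) (show (0:ℝ) < 3 * k + 1 by linarith)]
  by_contra hcon
  push_neg at hcon
  have hneg : (x + y + z - (1 + 2 * k)) * ((1 + k) * (x + y + z) - (3 * k - 1) * (2 * k + 1)) < 0 :=
    mul_neg_of_neg_of_pos (by linarith) hfac
  have hpos : 0 ≤ 2 * (1 + 2 * k) * ((x - k) * (y - k) + (y - k) * (z - k) + (x - k) * (z - k)) :=
    mul_nonneg (by linarith) hP
  rw [← hkey] at hpos
  linarith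

set_option maxHeartbeats 2000000 in
theorem stmt9 (Δ : ℝ) (hΔ : Δ ∈ Set.Ioo 0 (Real.pi / 2))
    (a b c : EuclideanSpace ℝ (Fin 3))
    (ha : ‖a‖ = 1) (hb : ‖b‖ = 1) (hc : ‖c‖ = 1)
    (hab : sdist a b = Δ) (hbc : sdist b c = Δ) (hac : sdist a c = Δ)
    (R : Set (EuclideanSpace ℝ (Fin 3)))
    (hR : R = {p | ‖p‖ = 1 ∧ sdist a p ≤ Δ ∧ sdist b p ≤ Δ ∧ sdist c p ≤ Δ}) :
    sInf {ρ : ℝ | ∃ o : EuclideanSpace ℝ (Fin 3), ‖o‖ = 1 ∧ ∀ p ∈ R, sdist o p ≤ ρ}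
      = Real.arcsin (2 * Real.sqrt 3 / 3 * Real.sin (Δ / 2)) := by
  obtain ⟨hΔ0, hΔπ2⟩ := hΔ
  have hπ : (0:ℝ) < Real.pi := Real.pi_pos
  have hΔπ : Δ < Real.pi := by linarith
  set k := Real.cos Δ with hkdef
  have hk0 : 0 < k := Real.cos_pos_of_mem_Ioo ⟨by linarith, hΔπ2⟩
  have hk1 : k < 1 := by
    have := Real.cos_lt_cos_of_nonneg_of_le_pi (le_refl 0) hΔπ.le hΔ0
    simpa using this
  -- inner products between the vertices
  have habs : ∀ u v : EuclideanSpace ℝ (Fin 3), ‖u‖ = 1 → ‖v‖ = 1 →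
      -1 ≤ ⟪u, v⟫ ∧ ⟪u, v⟫ ≤ 1 := by
    intro u v hu hv
    have := abs_real_inner_le_norm u v
    rw [hu, hv, mul_one] at this
    constructor <;> [exact neg_le_of_abs_le this; exact le_of_abs_le this]
  have hinner : ∀ u v : EuclideanSpace ℝ (Fin 3), ‖u‖ = 1 → ‖v‖ = 1 →
      sdist u v = Δ → ⟪u, v⟫ = k := by
    intro u v hu hv huv
    have h := habs u v hu hv
    have : Real.cos (Real.arccos ⟪u, v⟫) = ⟪u, v⟫ := Real.cos_arccos h.1 h.2
    rw [show Real.arccos ⟪u, v⟫ = Δ from huv] at this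
    exact this.symm
  have hiab : ⟪a, b⟫ = k := hinner a b ha hb hab
  have hibc : ⟪b, c⟫ = k := hinner b c hb hc hbc
  have hiac : ⟪a, c⟫ = k := hinner a c ha hc hac
  have hiaa : ⟪a, a⟫ = 1 := by rw [real_inner_self_eq_norm_sq, ha]; norm_num
  have hibb : ⟪b, b⟫ = 1 := by rw [real_inner_self_eq_norm_sq, hb]; norm_num
  have hicc : ⟪c, c⟫ = 1 := by rw [real_inner_self_eq_norm_sq, hc]; norm_num
  have hiba : ⟪b, a⟫ = k := by rw [real_inner_comm]; exact hiab
  have hicb : ⟪c, b⟫ = k := by rw [real_inner_comm]; exact hibc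
  have hica : ⟪c, a⟫ = k := by rw [real_inner_comm]; exact hiac
  -- norm of a + b + c
  have hssq : ⟪a + b + c, a + b + c⟫ = 3 + 6 * k := by
    simp only [inner_add_left, inner_add_right, hiaa, hibb, hicc, hiab, hiba, hibc, hicb,
      hiac, hica]
    ring
  set N := Real.sqrt (3 + 6 * k) with hNdef
  have h36 : (0:ℝ) < 3 + 6 * k := by linarith
  have hN0 : 0 < N := Real.sqrt_pos.2 h36
  have hNnorm : ‖a + b + c‖ = N := by
    rw [norm_eq_sqrt_real_inner, hssq]
  have hNsq : N ^ 2 = 3 + 6 * k := Real.sq_sqrt h36.le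
  -- the claimed radius
  set m := 2 * Real.sqrt 3 / 3 * Real.sin (Δ / 2) with hmdef
  set ρ₀ := Real.arcsin m with hρdef
  have hsin_pos : 0 < Real.sin (Δ / 2) := Real.sin_pos_of_pos_of_lt_pi (by linarith) (by linarith)
  have hm0 : 0 < m := by
    apply mul_pos _ hsin_pos
    positivity
  have hmsq : m ^ 2 = 2 * (1 - k) / 3 := by
    have h3 : Real.sqrt 3 ^ 2 = 3 := Real.sq_sqrt (by norm_num)
    have hhalf : Real.sin (Δ / 2) ^ 2 = 1 / 2 - Real.cos (2 * (Δ / 2)) / 2 :=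
      Real.sin_sq_eq_half_sub (Δ / 2)
    rw [show (2:ℝ) * (Δ / 2) = Δ by ring] at hhalf
    rw [hmdef, mul_pow, div_pow, mul_pow, h3, hhalf, ← hkdef]
    ring
  have hm1 : m < 1 := by
    have hsq : m ^ 2 < 1 ^ 2 := by rw [hmsq, one_pow]; linarith
    exact lt_of_pow_lt_pow_left₀ 2 zero_le_one hsq
  have hρ0 : 0 < ρ₀ := Real.arcsin_pos.2 hm0
  have hρπ2 : ρ₀ ≤ Real.pi / 2 := Real.arcsin_le_pi_div_two m
  set C := Real.cos ρ₀ with hCdef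
  have hC : C = Real.sqrt ((1 + 2 * k) / 3) := by
    rw [hCdef, hρdef, Real.cos_arcsin, hmsq,
      show (1:ℝ) - 2 * (1 - k) / 3 = (1 + 2 * k) / 3 by ring]
  have hCsq : C ^ 2 = (1 + 2 * k) / 3 := by
    rw [hC]; exact Real.sq_sqrt (by positivity)
  have hC0 : 0 < C := by
    rw [hC]; positivity
  have hCN : 3 * C = N := by
    have h3 : (3 * C - N) * (3 * C + N) = 0 := by
      have h1 : (3 * C) ^ 2 = N ^ 2 := by rw [hNsq]; linarith [hCsq]
      linear_combination h1
    rcases mul_eq_zero.1 h3 with h | h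
    · linarith
    · exfalso; linarith
  have hC1 : C ≤ 1 := by
    have hsq : C ^ 2 ≤ 1 ^ 2 := by rw [hCsq, one_pow]; linarith
    exact le_of_pow_le_pow_left₀ two_ne_zero zero_le_one hsq
  -- vertices belong to R
  have hsd_self : ∀ u : EuclideanSpace ℝ (Fin 3), ‖u‖ = 1 → sdist u u = 0 := by
    intro u hu
    have : ⟪u, u⟫ = 1 := by rw [real_inner_self_eq_norm_sq, hu]; norm_num
    simp [sdist, this, hu]
  have hsd_k : ∀ u v : EuclideanSpace ℝ (Fin 3), ⟪u, v⟫ = k → sdist u v = Δ := by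
    intro u v huv
    rw [sdist, huv, hkdef, Real.arccos_cos hΔ0.le hΔπ.le]
  have haR : a ∈ R := by
    rw [hR]
    exact ⟨ha, by rw [hsd_self a ha]; exact hΔ0.le, by rw [hsd_k b a hiba],
      by rw [hsd_k c a hica]⟩
  have hbR : b ∈ R := by
    rw [hR]
    exact ⟨hb, by rw [hsd_k a b hiab], by rw [hsd_self b hb]; exact hΔ0.le,
      by rw [hsd_k c b hicb]⟩
  have hcR : c ∈ R := by
    rw [hR]
    exact ⟨hc, by rw [hsd_k a c hiac], by rw [hsd_k b c hibc],
      by rw [hsd_self c hc]; exact hΔ0.le⟩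
  -- the candidate circumcenter
  set o : EuclideanSpace ℝ (Fin 3) := N⁻¹ • (a + b + c) with hodef
  have ho : ‖o‖ = 1 := by
    rw [hodef, norm_smul, hNnorm, Real.norm_eq_abs, abs_of_pos (inv_pos.2 hN0),
      inv_mul_cancel₀ hN0.ne']
  -- the set and its properties
  set S := {ρ : ℝ | ∃ o : EuclideanSpace ℝ (Fin 3), ‖o‖ = 1 ∧ ∀ p ∈ R, sdist o p ≤ ρ} with hSdef
  -- upper bound: ρ₀ ∈ S
  have hρ₀S : ρ₀ ∈ S := by
    refine ⟨o, ho, ?_⟩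
    intro p hp
    rw [hR] at hp
    obtain ⟨hp1, hpa, hpb, hpc⟩ := hp
    set x := ⟪a, p⟫ with hxdef
    set y := ⟪b, p⟫ with hydef
    set z := ⟪c, p⟫ with hzdef
    have hxb := habs a p ha hp1
    have hyb := habs b p hb hp1
    have hzb := habs c p hc hp1
    have hcos_le : ∀ t : ℝ, -1 ≤ t → t ≤ 1 → Real.arccos t ≤ Δ → k ≤ t := by
      intro t h1 h2 h3
      have := Real.cos_le_cos_of_nonneg_of_le_pi (Real.arccos_nonneg t) hΔπ.le h3
      rwa [Real.cos_arccos h1 h2] at this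
    have hx : k ≤ x := hcos_le x hxb.1 hxb.2 hpa
    have hy : k ≤ y := hcos_le y hyb.1 hyb.2 hpb
    have hz : k ≤ z := hcos_le z hzb.1 hzb.2 hpc
    -- Gram determinant of a, b, c, p vanishes
    have hipp : ⟪p, p⟫ = 1 := by rw [real_inner_self_eq_norm_sq, hp1]; norm_num
    have hipa : ⟪p, a⟫ = x := by rw [real_inner_comm]
    have hipb : ⟪p, b⟫ = y := by rw [real_inner_comm]
    have hipc : ⟪p, c⟫ = z := by rw [real_inner_comm]
    have hgram := gram4_det_eq_zero ![a, b, c, p]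
    have hmat : Matrix.of (fun i j : Fin 4 => ⟪![a, b, c, p] i, ![a, b, c, p] j⟫)
        = !![1, k, k, x; k, 1, k, y; k, k, 1, z; x, y, z, 1] := by
      ext i j
      fin_cases i <;> fin_cases j <;>
        simp only [Matrix.of_apply, Matrix.cons_val', Matrix.cons_val_zero, Matrix.cons_val_one,
          Matrix.head_cons, Matrix.empty_val', Matrix.cons_val_fin_one, Matrix.head_fin_const,
          Matrix.cons_val_two, Matrix.tail_cons, Matrix.cons_val_three, Fin.mk_zero, Fin.mk_one,
          Matrix.cons_val_succ] <;>
        first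
          | exact hiaa | exact hibb | exact hicc | exact hipp
          | exact hiab | exact hiba | exact hibc | exact hicb | exact hiac | exact hica
          | exact hipa | exact hipb | exact hipc | rfl
    rw [hmat] at hgram
    have hdet : (1 - k) * ((1 - k) * (1 + 2 * k) + k * (x + y + z) ^ 2
        - (1 + 2 * k) * (x ^ 2 + y ^ 2 + z ^ 2)) = 0 := by
      simp [Matrix.det_succ_row_zero, Fin.sum_univ_succ, Fin.succAbove] at hgram
      linear_combination hgram
    have hE : (1 - k) * (1 + 2 * k) + k * (x + y + z) ^ 2
        - (1 + 2 * k) * (x ^ 2 + y ^ 2 + z ^ 2) = 0 := by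
      rcases mul_eq_zero.1 hdet with h | h
      · exfalso; linarith
      · exact h
    have hs : 1 + 2 * k ≤ x + y + z := key_ineq k x y z hk0 hk1 hx hy hz hE
    -- hence the inner product with o is at least C
    have hio : ⟪o, p⟫ = N⁻¹ * (x + y + z) := by
      rw [hodef, real_inner_smul_left, inner_add_left, inner_add_left, ← hxdef, ← hydef, ← hzdef]
    have hCle : C ≤ ⟪o, p⟫ := by
      rw [hio, inv_mul_eq_div, le_div_iff₀ hN0]
      have h1 : C * N = 1 + 2 * k := by
        rw [← hCN]; linear_combination 3 * hCsq
      linarith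
    -- conclude
    rw [sdist]
    calc Real.arccos ⟪o, p⟫ = Real.pi / 2 - Real.arcsin ⟪o, p⟫ := rfl
      _ ≤ Real.pi / 2 - Real.arcsin C := by
          have := Real.monotone_arcsin hCle
          linarith
      _ = Real.arccos C := rfl
      _ = ρ₀ := by
          rw [hCdef, Real.arccos_cos hρ0.le (by linarith)]
  -- lower bound: every element of S is ≥ ρ₀
  have hlb : ∀ ρ ∈ S, ρ₀ ≤ ρ := by
    intro ρ hρ
    obtain ⟨w, hw, hcov⟩ := hρ
    by_contra hcon
    push_neg at hcon
    have hkey : ∀ u : EuclideanSpace ℝ (Fin 3), ‖u‖ = 1 → u ∈ R → C < ⟪w, u⟫ := by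
      intro u hu huR
      have h1 : sdist w u ≤ ρ := hcov u huR
      rw [sdist] at h1
      have hb' := habs w u hw hu
      have h2 : C < Real.cos (Real.arccos ⟪w, u⟫) := by
        apply Real.cos_lt_cos_of_nonneg_of_le_pi (Real.arccos_nonneg _) (by linarith)
        exact lt_of_le_of_lt h1 hcon
      rwa [Real.cos_arccos hb'.1 hb'.2] at h2
    have hsum : N < ⟪w, a + b + c⟫ := by
      have h1 := hkey a ha haR
      have h2 := hkey b hb hbR
      have h3 := hkey c hc hcR
      rw [inner_add_right, inner_add_right]
      linarith
    have hCS : ⟪w, a + b + c⟫ ≤ N := by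
      have := real_inner_le_norm w (a + b + c)
      rwa [hw, hNnorm, one_mul] at this
    linarith
  -- conclusion
  refine le_antisymm (csInf_le ⟨ρ₀, fun ρ hρ => hlb ρ hρ⟩ hρ₀S) (le_csInf ⟨ρ₀, hρ₀S⟩ hlb)
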